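/- There is a bijection between unbalanced minimal set covers of an n-element set and minimal set covers of sets with t elements for 0 ≤ t ≤ n − 1 (i.e., minimal set covers of ground sets of size at most n − 1), up to isomorphism. -/

import Mathlib

/-- `C` is a set cover of the finite type `V`: the union of its members is all of `V`. -/
def IsSetCover {V : Type*} [Fintype V] (C : Finset (Finset V)) : Prop :=
  ∀ v : V, ∃ A ∈ C, v ∈ A

/-- A set cover is minimal if no member is contained in the union of the remaining members. -/
def IsMinimalCover {V : Type*} [DecidableEq V] (C : Finset (Finset V)) : Prop :=
  ∀ A ∈ C, ¬ A ⊆ (C.erase A).sup id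

/-- A vertex is loyal if it belongs to exactly one member of `C`. -/
def Loyal {V : Type*} (C : Finset (Finset V)) (v : V) : Prop :=
  ∃! A : Finset V, A ∈ C ∧ v ∈ A

/-- A minimal set cover of `Fin n` is unbalanced if it contains a member of size
`n − |C| + 1`. -/
def UnbalancedCover (n : ℕ) (C : Finset (Finset (Fin n))) : Prop :=
  ∃ Y ∈ C, (Y.card : ℤ) = (n : ℤ) - C.card + 1

/-- Isomorphism of unbalanced minimal set covers of `Fin n`. -/
def UCoverRel (n : ℕ)
    (C D : {C : Finset (Finset (Fin n)) //
      IsSetCover C ∧ IsMinimalCover C ∧ UnbalancedCover n C}) : Prop :=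
  ∃ σ : Equiv.Perm (Fin n), C.1.image (fun A => A.image σ) = D.1

/-- Isomorphism of minimal set covers on ground sets of size `t ≤ n − 1`:
a bijection of ground sets carrying one collection onto the other. -/
def SmallCoverRel (n : ℕ)
    (C D : Σ t : Fin n,
      {C : Finset (Finset (Fin t.val)) // IsSetCover C ∧ IsMinimalCover C}) : Prop :=
  ∃ σ : Fin C.1.val ≃ Fin D.1.val, C.2.1.image (fun A => A.image σ) = D.2.1

open Finset

namespace CoverComp

variable {n : ℕ}

abbrev USub (n : ℕ) := {C : Finset (Finset (Fin n)) //
      IsSetCover C ∧ IsMinimalCover C ∧ UnbalancedCover n C}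
abbrev SOut (n : ℕ) := Σ t : Fin n,
      {C : Finset (Finset (Fin t.val)) // IsSetCover C ∧ IsMinimalCover C}

/-! ### generic helpers -/

lemma mem_image_equiv {α β : Type*} [DecidableEq β] (e : α ≃ β) (A : Finset α) (y : β) :
    y ∈ A.image ⇑e ↔ e.symm y ∈ A := by
  simp only [Finset.mem_image]
  constructor
  · rintro ⟨x, hx, rfl⟩; simpa using hx
  · intro h; exact ⟨e.symm y, h, by simp⟩

lemma image_image_equiv {α β : Type*} [DecidableEq α] [DecidableEq β] (e : α ≃ β)
    (A : Finset α) : (A.image ⇑e).image ⇑e.symm = A := by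
  rw [Finset.image_image]
  simp

lemma sup_id_image {α β : Type*} [DecidableEq α] [DecidableEq β]
    (s : Finset (Finset α)) (f : α → β) :
    (s.sup id).image f = s.sup (fun A => A.image f) := by
  induction s using Finset.induction_on with
  | empty => simp
  | insert _ _ h ih => simp [Finset.sup_insert, Finset.image_union, ih]

lemma exists_loyal {V : Type*} [DecidableEq V] {D : Finset (Finset V)}
    (hmin : IsMinimalCover D) {A : Finset V} (hA : A ∈ D) :
    ∃ a ∈ A, ∀ B ∈ D, a ∈ B → B = A := by
  have := hmin A hA
  rw [Finset.not_subset] at this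
  obtain ⟨a, haA, ha⟩ := this
  refine ⟨a, haA, fun B hB haB => ?_⟩
  by_contra hne
  exact ha (Finset.le_sup (f := id) (Finset.mem_erase.mpr ⟨fun h => hne h, hB⟩) haB)

lemma image_equiv_sdiff_univ {α β : Type*} [Fintype α] [Fintype β] [DecidableEq α]
    [DecidableEq β] (e : α ≃ β) (S : Finset α) :
    (Finset.univ \ S).image ⇑e = Finset.univ \ S.image ⇑e := by
  ext y
  rw [mem_image_equiv, Finset.mem_sdiff, Finset.mem_sdiff, mem_image_equiv]
  simp

lemma mapC_trans {α β γ : Type*} [DecidableEq α] [DecidableEq β] [DecidableEq γ]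
    (σ : α ≃ β) (τ : β ≃ γ) (S : Finset (Finset α)) :
    S.image (fun A => A.image ⇑(σ.trans τ)) =
      (S.image (fun A => A.image ⇑σ)).image (fun A => A.image ⇑τ) := by
  rw [Finset.image_image]
  apply Finset.image_congr
  intro A _
  simp only [Function.comp, Finset.image_image]
  rfl

/-! ### relation helpers -/

lemma relS_trans {a b c : SOut n} (h1 : SmallCoverRel n a b) (h2 : SmallCoverRel n b c) :
    SmallCoverRel n a c := by
  obtain ⟨σ, hσ⟩ := h1
  obtain ⟨τ, hτ⟩ := h2
  exact ⟨σ.trans τ, by rw [mapC_trans, hσ, hτ]⟩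

lemma relS_of_eq {a b : SOut n} (h : a = b) : SmallCoverRel n a b := by
  subst h
  refine ⟨Equiv.refl _, ?_⟩
  have : ∀ A : Finset (Fin a.1.val), A.image ⇑(Equiv.refl (Fin a.1.val)) = A := by
    intro A; simp
  rw [Finset.image_congr (fun A _ => this A)]
  simp

lemma relU_trans {a b c : USub n} (h1 : UCoverRel n a b) (h2 : UCoverRel n b c) :
    UCoverRel n a c := by
  obtain ⟨σ, hσ⟩ := h1
  obtain ⟨τ, hτ⟩ := h2
  exact ⟨σ.trans τ, by rw [mapC_trans, hσ, hτ]⟩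

/-! ### the structure theorem -/

lemma structure_thm {C : Finset (Finset (Fin n))}
    (hmin : IsMinimalCover C) {Y : Finset (Fin n)} (hY : Y ∈ C)
    (hcard : (Y.card : ℤ) = (n : ℤ) - C.card + 1) :
    ∀ A ∈ C.erase Y, ∃ v, A \ Y = {v} ∧ ∀ B ∈ C, v ∈ B → B = A := by
  classical
  set L : Finset (Fin n) → Finset (Fin n) := fun A => A \ (C.erase A).sup id with hL
  have hLsub : ∀ A ∈ C, L A ⊆ A := fun A _ => Finset.sdiff_subset
  have hLloyal : ∀ A ∈ C, ∀ x ∈ L A, ∀ B ∈ C, x ∈ B → B = A := by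
    intro A hA x hx B hB hxB
    by_contra hne
    exact (Finset.mem_sdiff.mp hx).2
      (Finset.le_sup (f := id) (Finset.mem_erase.mpr ⟨fun h => hne h, hB⟩) hxB)
  have hLne : ∀ A ∈ C, (L A).Nonempty := by
    intro A hA
    have := hmin A hA
    rw [Finset.not_subset] at this
    obtain ⟨a, h1, h2⟩ := this
    exact ⟨a, Finset.mem_sdiff.mpr ⟨h1, h2⟩⟩
  have hdisj : ∀ A ∈ C.erase Y, ∀ B ∈ C.erase Y, A ≠ B → Disjoint (L A) (L B) := by
    intro A hA B hB hne
    rw [Finset.disjoint_left]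
    intro x hxA hxB
    exact hne (hLloyal B (Finset.mem_of_mem_erase hB) x hxB A
      (Finset.mem_of_mem_erase hA) (hLsub A (Finset.mem_of_mem_erase hA) hxA))
  have hLoutY : ∀ A ∈ C.erase Y, L A ⊆ Finset.univ \ Y := by
    intro A hA x hx
    rw [Finset.mem_sdiff]
    refine ⟨Finset.mem_univ _, fun hxY => ?_⟩
    exact (Finset.mem_erase.mp hA).1
      ((hLloyal A (Finset.mem_of_mem_erase hA) x hx Y hY hxY).symm)
  have hCpos : 0 < C.card := Finset.card_pos.mpr ⟨Y, hY⟩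
  have hYle : Y.card ≤ n := by simpa using Finset.card_le_card (Finset.subset_univ Y)
  have hcompl : ((Finset.univ \ Y : Finset (Fin n)).card : ℤ) = (C.card : ℤ) - 1 := by
    have h : (Finset.univ \ Y : Finset (Fin n)).card = n - Y.card := by
      rw [Finset.card_sdiff_of_subset (Finset.subset_univ Y)]; simp
    rw [h]; push_cast [hYle]; omega
  have herase : ((C.erase Y).card : ℤ) = (C.card : ℤ) - 1 := by
    rw [Finset.card_erase_of_mem hY]; push_cast [hCpos]; omega
  have hbi : (C.erase Y).biUnion L ⊆ Finset.univ \ Y := by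
    intro x hx
    obtain ⟨A, hA, hxA⟩ := Finset.mem_biUnion.mp hx
    exact hLoutY A hA hxA
  have hbicard : ((C.erase Y).biUnion L).card = ∑ A ∈ C.erase Y, (L A).card :=
    Finset.card_biUnion hdisj
  have hsum_le : ∑ A ∈ C.erase Y, (L A).card ≤ (C.erase Y).card := by
    have h1 := Finset.card_le_card hbi
    rw [hbicard] at h1
    omega
  have hone : ∀ A ∈ C.erase Y, (L A).card = 1 := by
    intro A hA
    by_contra hne
    have h2 : 2 ≤ (L A).card := by
      have h3 := Finset.card_pos.mpr (hLne A (Finset.mem_of_mem_erase hA))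
      omega
    have h4 : (C.erase Y).card < ∑ A ∈ C.erase Y, (L A).card := by
      have : ∑ _A ∈ C.erase Y, 1 < ∑ A ∈ C.erase Y, (L A).card :=
        Finset.sum_lt_sum
          (fun B hB => Finset.card_pos.mpr (hLne B (Finset.mem_of_mem_erase hB)))
          ⟨A, hA, by omega⟩
      simpa using this
    omega
  have hbieq : (C.erase Y).biUnion L = Finset.univ \ Y := by
    apply Finset.eq_of_subset_of_card_le hbi
    rw [hbicard, Finset.sum_congr rfl hone]
    simp only [Finset.sum_const, smul_eq_mul, mul_one]
    omega
  intro A hA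
  obtain ⟨v, hv⟩ := Finset.card_eq_one.mp (hone A hA)
  refine ⟨v, ?_, ?_⟩
  · apply Finset.Subset.antisymm
    · intro x hx
      have hxc : x ∈ Finset.univ \ Y := Finset.mem_sdiff.mpr ⟨Finset.mem_univ _,
        (Finset.mem_sdiff.mp hx).2⟩
      rw [← hbieq] at hxc
      obtain ⟨B, hB, hxB⟩ := Finset.mem_biUnion.mp hxc
      have : A = B := hLloyal B (Finset.mem_of_mem_erase hB) x hxB A
        (Finset.mem_of_mem_erase hA) (Finset.mem_sdiff.mp hx).1
      rw [← this, hv] at hxB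
      exact hxB
    · rw [← hv]
      intro x hx
      exact Finset.mem_sdiff.mpr ⟨hLsub A (Finset.mem_of_mem_erase hA) hx,
        (Finset.mem_sdiff.mp (hLoutY A hA hx)).2⟩
  · have hvL : v ∈ L A := by rw [hv]; exact Finset.mem_singleton_self v
    exact hLloyal A (Finset.mem_of_mem_erase hA) v hvL

/-! ### forward construction -/

def FwdHyp (C : Finset (Finset (Fin n))) (Y : Finset (Fin n)) : Prop :=
  IsSetCover C ∧ IsMinimalCover C ∧ Y ∈ C ∧ (Y.card : ℤ) = (n : ℤ) - C.card + 1

def fwdZ (C : Finset (Finset (Fin n))) (Y : Finset (Fin n)) : Finset (Fin n) :=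
  (C.erase Y).sup id

lemma fwdZ_card_lt {C : Finset (Finset (Fin n))} {Y : Finset (Fin n)}
    (h : FwdHyp C Y) : (fwdZ C Y).card < n := by
  have hns := h.2.1 Y h.2.2.1
  rw [Finset.not_subset] at hns
  obtain ⟨y, hyY, hyZ⟩ := hns
  have hyZ' : y ∉ fwdZ C Y := hyZ
  have hne : fwdZ C Y ≠ Finset.univ := fun hu => hyZ' (by rw [hu]; exact Finset.mem_univ y)
  have := Finset.card_lt_card ((Finset.subset_univ _).ssubset_of_ne hne)
  simpa using this

def fwdφ (C : Finset (Finset (Fin n))) (Y : Finset (Fin n)) (A : Finset (Fin n)) :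
    Finset (Fin (fwdZ C Y).card) :=
  Finset.univ.filter (fun i => (((fwdZ C Y).orderIsoOfFin rfl i : Fin n)) ∈ A)

def fwdD (C : Finset (Finset (Fin n))) (Y : Finset (Fin n)) :
    Finset (Finset (Fin (fwdZ C Y).card)) :=
  (C.erase Y).image (fwdφ C Y)

lemma mem_fwdφ {C : Finset (Finset (Fin n))} {Y A : Finset (Fin n)}
    {i : Fin (fwdZ C Y).card} :
    i ∈ fwdφ C Y A ↔ (((fwdZ C Y).orderIsoOfFin rfl i : Fin n)) ∈ A := by
  rw [fwdφ, Finset.mem_filter]; exact ⟨fun h => h.2, fun h => ⟨Finset.mem_univ _, h⟩⟩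

lemma fwd_cover {C : Finset (Finset (Fin n))} {Y : Finset (Fin n)} :
    IsSetCover (fwdD C Y) := by
  intro i
  have hmem : ((fwdZ C Y).orderIsoOfFin rfl i : Fin n) ∈ fwdZ C Y :=
    ((fwdZ C Y).orderIsoOfFin rfl i).2
  simp only [fwdZ, Finset.mem_sup, id] at hmem
  obtain ⟨A, hA, hiA⟩ := hmem
  exact ⟨fwdφ C Y A, Finset.mem_image_of_mem _ hA, mem_fwdφ.mpr hiA⟩

lemma fwd_min {C : Finset (Finset (Fin n))} {Y : Finset (Fin n)}
    (h : FwdHyp C Y) : IsMinimalCover (fwdD C Y) := by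
  intro B hB hsub
  obtain ⟨A, hA, rfl⟩ := Finset.mem_image.mp hB
  apply h.2.1 A (Finset.mem_of_mem_erase hA)
  intro x hxA
  have hxZ : x ∈ fwdZ C Y := Finset.le_sup (f := id) hA hxA
  set e := (fwdZ C Y).orderIsoOfFin rfl with he
  set i := e.symm ⟨x, hxZ⟩ with hi
  have hei : (e i : Fin n) = x := by rw [hi]; simp
  have hiB : i ∈ fwdφ C Y A := mem_fwdφ.mpr (by rw [hei]; exact hxA)
  have := hsub hiB
  rw [Finset.mem_sup] at this
  obtain ⟨B', hB', hiB'⟩ := this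
  have hB'mem := Finset.mem_of_mem_erase hB'
  obtain ⟨A', hA', rfl⟩ := Finset.mem_image.mp hB'mem
  have hAA' : A' ≠ A := by
    intro hcon
    exact (Finset.mem_erase.mp hB').1 (by rw [hcon])
  have hxA' : x ∈ A' := by
    have := mem_fwdφ.mp hiB'
    rwa [hei] at this
  rw [Finset.mem_sup]
  exact ⟨A', Finset.mem_erase.mpr ⟨hAA', Finset.mem_of_mem_erase hA'⟩, hxA'⟩

noncomputable def fwd (C : Finset (Finset (Fin n))) (Y : Finset (Fin n))
    (h : FwdHyp C Y) : SOut n :=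
  ⟨⟨(fwdZ C Y).card, fwdZ_card_lt h⟩, ⟨fwdD C Y, fwd_cover, fwd_min h⟩⟩

lemma fwd_equiv {C C' : Finset (Finset (Fin n))} {Y Y' : Finset (Fin n)}
    (h : FwdHyp C Y) (h' : FwdHyp C' Y') (σ : Equiv.Perm (Fin n))
    (hC : C.image (fun A => A.image ⇑σ) = C') (hY : Y.image ⇑σ = Y') :
    SmallCoverRel n (fwd C Y h) (fwd C' Y' h') := by
  classical
  have hinj : Function.Injective (fun A : Finset (Fin n) => A.image ⇑σ) := by
    intro A B hAB
    have := congrArg (Finset.image ⇑σ.symm) hAB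
    simpa [Finset.image_image] using this
  have herase : C'.erase Y' = (C.erase Y).image (fun A => A.image ⇑σ) := by
    rw [← hC, ← hY, Finset.image_erase hinj]
  have hZ : fwdZ C' Y' = (fwdZ C Y).image ⇑σ := by
    rw [fwdZ, herase, Finset.sup_image, fwdZ, sup_id_image]
    rfl
  have hmemZ : ∀ x : Fin n, x ∈ fwdZ C Y ↔ σ x ∈ fwdZ C' Y' := by
    intro x
    rw [hZ, mem_image_equiv (σ : Fin n ≃ Fin n)]
    simp
  set e := (fwdZ C Y).orderIsoOfFin rfl with he
  set e' := (fwdZ C' Y').orderIsoOfFin rfl with he'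
  set σsub : {x // x ∈ fwdZ C Y} ≃ {x // x ∈ fwdZ C' Y'} :=
    σ.subtypeEquiv hmemZ with hσsub
  set τ : Fin (fwdZ C Y).card ≃ Fin (fwdZ C' Y').card :=
    e.toEquiv.trans (σsub.trans e'.toEquiv.symm) with hτ
  have key : ∀ i : Fin (fwdZ C' Y').card, σ.symm (e' i : Fin n) = (e (τ.symm i) : Fin n) := by
    intro i
    simp [hτ, hσsub, Equiv.subtypeEquiv]
  refine ⟨τ, ?_⟩
  show (fwdD C Y).image (fun A => A.image ⇑τ) = fwdD C' Y'
  rw [fwdD, fwdD, herase, Finset.image_image, Finset.image_image]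
  apply Finset.image_congr
  intro A hA
  simp only [Function.comp]
  ext i
  rw [mem_image_equiv τ, mem_fwdφ, mem_fwdφ, mem_image_equiv (σ : Fin n ≃ Fin n)]
  show _ ↔ σ.symm _ ∈ A
  rw [key i]



/-! ### backward construction -/

/-- A loyal choice system for a collection `E`. -/
def Sys (E : Finset (Finset (Fin n))) (V : Finset (Fin n) → Fin n) : Prop :=
  ∀ B ∈ E, V B ∈ B ∧ ∀ B' ∈ E, V B ∈ B' → B' = B

def bwdW (E : Finset (Finset (Fin n))) (V : Finset (Fin n) → Fin n) :
    Finset (Finset (Fin n)) :=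
  insert (Finset.univ \ E.image V) E

/-- A point avoided by all members of `E`. -/
def Avoid (E : Finset (Finset (Fin n))) (w : Fin n) : Prop := ∀ B ∈ E, w ∉ B

lemma sys_exists (hn : 0 < n) (E : Finset (Finset (Fin n)))
    (hE : ∀ B ∈ E, ∃ v ∈ B, ∀ B' ∈ E, v ∈ B' → B' = B) : ∃ V, Sys E V := by
  have h : ∀ B : Finset (Fin n), ∃ v : Fin n,
      B ∈ E → (v ∈ B ∧ ∀ B' ∈ E, v ∈ B' → B' = B) := by
    intro B
    by_cases hB : B ∈ E
    · obtain ⟨v, h1, h2⟩ := hE B hB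
      exact ⟨v, fun _ => ⟨h1, h2⟩⟩
    · exact ⟨⟨0, hn⟩, fun h => absurd h hB⟩
  choose V hV using h
  exact ⟨V, fun B hB => hV B hB⟩

lemma sys_injOn {E : Finset (Finset (Fin n))} {V : Finset (Fin n) → Fin n}
    (hS : Sys E V) : ∀ B ∈ E, ∀ B' ∈ E, V B = V B' → B = B' := by
  intro B hB B' hB' h
  exact (hS B' hB').2 B hB (by rw [← h]; exact (hS B hB).1)

lemma avoid_notmem_Y {E : Finset (Finset (Fin n))} {V : Finset (Fin n) → Fin n}
    {w : Fin n} (hS : Sys E V) (hw : Avoid E w) : w ∉ E.image V := by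
  intro hmem
  obtain ⟨B, hB, hVB⟩ := Finset.mem_image.mp hmem
  exact hw B hB (hVB ▸ (hS B hB).1)

lemma bwdW_Y_notmem {E : Finset (Finset (Fin n))} {V : Finset (Fin n) → Fin n}
    {w : Fin n} (hS : Sys E V) (hw : Avoid E w) :
    Finset.univ \ E.image V ∉ E := by
  intro hmem
  have hwY : w ∈ Finset.univ \ E.image V :=
    Finset.mem_sdiff.mpr ⟨Finset.mem_univ _, avoid_notmem_Y hS hw⟩
  exact hw _ hmem hwY

lemma bwdW_cover {E : Finset (Finset (Fin n))} {V : Finset (Fin n) → Fin n}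
    (hS : Sys E V) : IsSetCover (bwdW E V) := by
  intro x
  by_cases hx : x ∈ E.image V
  · obtain ⟨B, hB, hVB⟩ := Finset.mem_image.mp hx
    exact ⟨B, Finset.mem_insert_of_mem hB, hVB ▸ (hS B hB).1⟩
  · exact ⟨Finset.univ \ E.image V, Finset.mem_insert_self _ _,
      Finset.mem_sdiff.mpr ⟨Finset.mem_univ _, hx⟩⟩

lemma bwdW_min {E : Finset (Finset (Fin n))} {V : Finset (Fin n) → Fin n}
    {w : Fin n} (hS : Sys E V) (hw : Avoid E w) : IsMinimalCover (bwdW E V) := by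
  have hYE : Finset.univ \ E.image V ∉ E := bwdW_Y_notmem hS hw
  intro A hA hsub
  rw [show bwdW E V = insert (Finset.univ \ E.image V) E from rfl] at hA hsub
  rcases Finset.mem_insert.mp hA with hAY | hAE
  · subst hAY
    rw [Finset.erase_insert hYE] at hsub
    have hwY : w ∈ Finset.univ \ E.image V :=
      Finset.mem_sdiff.mpr ⟨Finset.mem_univ _, avoid_notmem_Y hS hw⟩
    have := hsub hwY
    rw [Finset.mem_sup] at this
    obtain ⟨B, hB, hwB⟩ := this
    exact hw B hB hwB
  · have hvA := (hS A hAE).1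
    have := hsub hvA
    rw [Finset.mem_sup] at this
    obtain ⟨B, hB, hvB⟩ := this
    have hBne := (Finset.mem_erase.mp hB).1
    rcases Finset.mem_insert.mp (Finset.mem_of_mem_erase hB) with hBY | hBE
    · subst hBY
      exact (Finset.mem_sdiff.mp hvB).2 (Finset.mem_image_of_mem V hAE)
    · exact hBne ((hS A hAE).2 B hBE hvB)

lemma bwdW_Ycard {E : Finset (Finset (Fin n))} {V : Finset (Fin n) → Fin n}
    {w : Fin n} (hS : Sys E V) (hw : Avoid E w) :
    ((Finset.univ \ E.image V : Finset (Fin n)).card : ℤ) =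
      (n : ℤ) - (bwdW E V).card + 1 := by
  have hinj : (E.image V).card = E.card := by
    apply Finset.card_image_of_injOn
    intro B hB B' hB' h
    exact sys_injOn hS B hB B' hB' h
  have hle : (E.image V).card ≤ n := by
    simpa using Finset.card_le_card (Finset.subset_univ (E.image V))
  have hcard : (bwdW E V).card = E.card + 1 :=
    Finset.card_insert_of_notMem (bwdW_Y_notmem hS hw)
  have hY : (Finset.univ \ E.image V : Finset (Fin n)).card = n - (E.image V).card := by
    rw [Finset.card_sdiff_of_subset (Finset.subset_univ _)]; simp
  rw [hY, hcard, hinj]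
  rw [← hinj] at *
  push_cast [hle]
  omega

/-! the backward map on `SOut` -/

def jm (t : Fin n) : Fin t.val → Fin n := Fin.castLE t.isLt.le

lemma jm_inj (t : Fin n) : Function.Injective (jm t) := by
  intro a b h
  exact Fin.castLE_injective _ h

lemma jm_lt (t : Fin n) (i : Fin t.val) : (jm t i).val < t.val := i.isLt

def bwdE (s : SOut n) : Finset (Finset (Fin n)) :=
  s.2.1.image (fun A => A.image (jm s.1))

lemma bwdE_loyal (s : SOut n) :
    ∀ B ∈ bwdE s, ∃ v ∈ B, ∀ B' ∈ bwdE s, v ∈ B' → B' = B := by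
  intro B hB
  obtain ⟨A, hA, rfl⟩ := Finset.mem_image.mp hB
  obtain ⟨a, haA, hloyal⟩ := exists_loyal s.2.2.2 hA
  refine ⟨jm s.1 a, Finset.mem_image_of_mem _ haA, ?_⟩
  intro B' hB' hmem
  obtain ⟨A', hA', rfl⟩ := Finset.mem_image.mp hB'
  obtain ⟨a', ha'A', ha'⟩ := Finset.mem_image.mp hmem
  have : a' = a := jm_inj s.1 ha'
  subst this
  rw [hloyal A' hA' ha'A']

lemma bwdE_bdd (s : SOut n) : ∀ B ∈ bwdE s, ∀ x ∈ B, x.val < s.1.val := by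
  intro B hB x hx
  obtain ⟨A, _, rfl⟩ := Finset.mem_image.mp hB
  obtain ⟨a, _, rfl⟩ := Finset.mem_image.mp hx
  exact jm_lt s.1 a

lemma bwdE_avoid (s : SOut n) : Avoid (bwdE s) ⟨n - 1, by have := s.1.pos; omega⟩ := by
  intro B hB hmem
  have h1 : n - 1 < s.1.val := bwdE_bdd s B hB _ hmem
  have h2 : s.1.val < n := s.1.isLt
  omega

noncomputable def bwdV (s : SOut n) : Finset (Fin n) → Fin n :=
  (sys_exists s.1.pos (bwdE s) (bwdE_loyal s)).choose

lemma bwdV_spec (s : SOut n) : Sys (bwdE s) (bwdV s) :=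
  (sys_exists s.1.pos (bwdE s) (bwdE_loyal s)).choose_spec

noncomputable def bwd (s : SOut n) : Finset (Finset (Fin n)) :=
  bwdW (bwdE s) (bwdV s)

lemma bwd_cover (s : SOut n) : IsSetCover (bwd s) := bwdW_cover (bwdV_spec s)

lemma bwd_min (s : SOut n) : IsMinimalCover (bwd s) :=
  bwdW_min (bwdV_spec s) (bwdE_avoid s)

lemma bwd_unbal (s : SOut n) : UnbalancedCover n (bwd s) :=
  ⟨Finset.univ \ (bwdE s).image (bwdV s), Finset.mem_insert_self _ _,
    bwdW_Ycard (bwdV_spec s) (bwdE_avoid s)⟩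

noncomputable def gG (s : SOut n) : USub n :=
  ⟨bwd s, bwd_cover s, bwd_min s, bwd_unbal s⟩

/-! ### loyal-system independence -/

lemma image_swap_self {α : Type*} [DecidableEq α] {A : Finset α} {u v : α}
    (hu : u ∈ A) (hv : v ∈ A) : A.image ⇑(Equiv.swap u v) = A := by
  ext y
  rw [mem_image_equiv, Equiv.symm_swap]
  rcases eq_or_ne y u with rfl | hyu
  · rw [Equiv.swap_apply_left]
    simp [hu, hv]
  · rcases eq_or_ne y v with rfl | hyv
    · rw [Equiv.swap_apply_right]
      simp [hu, hv]
    · rw [Equiv.swap_apply_of_ne_of_ne hyu hyv]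

lemma image_swap_notmem {α : Type*} [DecidableEq α] {A : Finset α} {u v : α}
    (hu : u ∉ A) (hv : v ∉ A) : A.image ⇑(Equiv.swap u v) = A := by
  apply Finset.image_congr (g := id) ?_ |>.trans Finset.image_id
  intro x hx
  exact Equiv.swap_apply_of_ne_of_ne (fun h => hu (h ▸ hx)) (fun h => hv (h ▸ hx))

lemma sys_indep_aux (E : Finset (Finset (Fin n))) (k : ℕ) :
    ∀ V₁ V₂ : Finset (Fin n) → Fin n, Sys E V₁ → Sys E V₂ →
      (E.filter fun B => V₁ B ≠ V₂ B).card ≤ k →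
      ∃ σ : Equiv.Perm (Fin n),
        (bwdW E V₁).image (fun A => A.image ⇑σ) = bwdW E V₂ := by
  induction k with
  | zero =>
    intro V₁ V₂ hS₁ hS₂ hk
    have hfe : ∀ B ∈ E, V₁ B = V₂ B := by
      intro B hB
      by_contra hne
      have : B ∈ E.filter fun B => V₁ B ≠ V₂ B := Finset.mem_filter.mpr ⟨hB, hne⟩
      have := Finset.card_pos.mpr ⟨B, this⟩
      omega
    have him : E.image V₁ = E.image V₂ := Finset.image_congr hfe
    have heq : bwdW E V₁ = bwdW E V₂ := by rw [bwdW, bwdW, him]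
    refine ⟨Equiv.refl _, ?_⟩
    rw [← heq]
    apply Finset.image_congr (g := id) ?_ |>.trans Finset.image_id
    intro A _
    simp
  | succ k ih =>
    intro V₁ V₂ hS₁ hS₂ hk
    by_cases h0 : (E.filter fun B => V₁ B ≠ V₂ B).card = 0
    · exact ih V₁ V₂ hS₁ hS₂ (by omega)
    · obtain ⟨B₀, hB₀f⟩ := Finset.card_pos.mp (Nat.pos_of_ne_zero h0)
      have hB₀E : B₀ ∈ E := (Finset.mem_filter.mp hB₀f).1
      have hv12 : V₁ B₀ ≠ V₂ B₀ := (Finset.mem_filter.mp hB₀f).2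
      set v₁ := V₁ B₀ with hv₁
      set v₂ := V₂ B₀ with hv₂
      set V' : Finset (Fin n) → Fin n := fun B => if B = B₀ then v₂ else V₁ B with hV'
      have hS' : Sys E V' := by
        intro B hB
        by_cases hBB : B = B₀
        · subst hBB
          simp only [hV', if_pos rfl]
          exact hS₂ B hB
        · simp only [hV', if_neg hBB]
          exact hS₁ B hB
      have hfilter : (E.filter fun B => V' B ≠ V₂ B).card ≤ k := by
        have hsub : (E.filter fun B => V' B ≠ V₂ B) ⊆
            (E.filter fun B => V₁ B ≠ V₂ B).erase B₀ := by
          intro B hB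
          have h1 := Finset.mem_filter.mp hB
          have hBB : B ≠ B₀ := by
            intro hcon
            subst hcon
            exact h1.2 (by simp [hV', hv₂])
          refine Finset.mem_erase.mpr ⟨hBB, Finset.mem_filter.mpr ⟨h1.1, ?_⟩⟩
          have : V' B = V₁ B := by simp [hV', if_neg hBB]
          rw [← this]
          exact h1.2
        have := Finset.card_le_card hsub
        have h2 := Finset.card_erase_of_mem hB₀f
        omega
      obtain ⟨σ', hσ'⟩ := ih V' V₂ hS' hS₂ hfilter
      -- the swap
      have hv₁loyal : ∀ B ∈ E, v₁ ∈ B → B = B₀ := fun B hB h => (hS₁ B₀ hB₀E).2 B hB h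
      have hv₂loyal : ∀ B ∈ E, v₂ ∈ B → B = B₀ := fun B hB h => (hS₂ B₀ hB₀E).2 B hB h
      set σ₀ := Equiv.swap v₁ v₂ with hσ₀
      have hmem : ∀ B ∈ E, B.image ⇑σ₀ = B := by
        intro B hB
        by_cases hBB : B = B₀
        · subst hBB
          exact image_swap_self (hS₁ B hB).1 ((hS₂ B hB).1)
        · refine image_swap_notmem ?_ ?_
          · exact fun h => hBB (hv₁loyal B hB h)
          · exact fun h => hBB (hv₂loyal B hB h)
      have hEim : E.image (fun A => A.image ⇑σ₀) = E := by
        calc E.image (fun A => A.image ⇑σ₀) = E.image id := Finset.image_congr hmem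
        _ = E := Finset.image_id
      have hVim : (E.image V₁).image ⇑σ₀ = E.image V' := by
        rw [Finset.image_image]
        apply Finset.image_congr
        intro B hB
        simp only [Function.comp]
        by_cases hBB : B = B₀
        · subst hBB
          simp [hV', hσ₀, hv₁, Equiv.swap_apply_left]
        · have h1 : V₁ B ≠ v₁ := fun h => hBB (hv₁loyal B hB (h ▸ (hS₁ B hB).1))
          have h2 : V₁ B ≠ v₂ := fun h => hBB (hv₂loyal B hB (h ▸ (hS₁ B hB).1))
          rw [hσ₀]
          simp only [hV', if_neg hBB]
          exact Equiv.swap_apply_of_ne_of_ne h1 h2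
      have hstep : (bwdW E V₁).image (fun A => A.image ⇑σ₀) = bwdW E V' := by
        rw [bwdW, bwdW, Finset.image_insert, hEim,
          image_equiv_sdiff_univ σ₀, hVim]
      refine ⟨σ₀.trans σ', ?_⟩
      rw [mapC_trans, hstep, hσ']

lemma sys_indep {E : Finset (Finset (Fin n))} {V₁ V₂ : Finset (Fin n) → Fin n}
    (hS₁ : Sys E V₁) (hS₂ : Sys E V₂) :
    ∃ σ : Equiv.Perm (Fin n),
      (bwdW E V₁).image (fun A => A.image ⇑σ) = bwdW E V₂ :=
  sys_indep_aux E _ V₁ V₂ hS₁ hS₂ le_rfl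

/-! ### witness swap -/

lemma imageFun_inj {α β : Type*} [DecidableEq α] [DecidableEq β] (σ : α ≃ β) :
    Function.Injective (fun A : Finset α => A.image ⇑σ) := by
  intro A B hAB
  have := congrArg (Finset.image ⇑σ.symm) hAB
  simpa [Finset.image_image] using this

lemma witness_swap {C : Finset (Finset (Fin n))} (hmin : IsMinimalCover C)
    {Y₁ Y₂ : Finset (Fin n)} (h₁ : Y₁ ∈ C) (hc₁ : (Y₁.card : ℤ) = (n : ℤ) - C.card + 1)
    (h₂ : Y₂ ∈ C) (hc₂ : (Y₂.card : ℤ) = (n : ℤ) - C.card + 1) :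
    ∃ σ : Equiv.Perm (Fin n),
      C.image (fun A => A.image ⇑σ) = C ∧ Y₁.image ⇑σ = Y₂ := by
  rcases eq_or_ne Y₁ Y₂ with rfl | hne
  · refine ⟨Equiv.refl _, ?_, by simp⟩
    apply Finset.image_congr (g := id) ?_ |>.trans Finset.image_id
    intro A _
    simp
  · obtain ⟨v, hv, hvloyal⟩ := structure_thm hmin h₁ hc₁ Y₂
      (Finset.mem_erase.mpr ⟨hne.symm, h₂⟩)
    obtain ⟨w, hw, hwloyal⟩ := structure_thm hmin h₂ hc₂ Y₁
      (Finset.mem_erase.mpr ⟨hne, h₁⟩)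
    have hvY₂ : v ∈ Y₂ := (Finset.mem_sdiff.mp (hv ▸ Finset.mem_singleton_self v)).1
    have hvY₁ : v ∉ Y₁ := (Finset.mem_sdiff.mp (hv ▸ Finset.mem_singleton_self v)).2
    have hwY₁ : w ∈ Y₁ := (Finset.mem_sdiff.mp (hw ▸ Finset.mem_singleton_self w)).1
    have hwY₂ : w ∉ Y₂ := (Finset.mem_sdiff.mp (hw ▸ Finset.mem_singleton_self w)).2
    have hvw : w ≠ v := fun h => hvY₁ (h ▸ hwY₁)
    set σ := Equiv.swap w v with hσ
    have himY₁ : Y₁.image ⇑σ = Y₂ := by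
      ext y
      rw [mem_image_equiv, hσ, Equiv.symm_swap]
      rcases eq_or_ne y w with rfl | hyw
      · rw [Equiv.swap_apply_left]
        simp [hvY₁, hwY₂]
      · rcases eq_or_ne y v with rfl | hyv
        · rw [Equiv.swap_apply_right]
          simp [hwY₁, hvY₂]
        · rw [Equiv.swap_apply_of_ne_of_ne hyw hyv]
          constructor
          · intro hy
            by_contra hy2
            exact hyw (Finset.mem_singleton.mp (hw ▸ Finset.mem_sdiff.mpr ⟨hy, hy2⟩))
          · intro hy
            by_contra hy2
            exact hyv (Finset.mem_singleton.mp (hv ▸ Finset.mem_sdiff.mpr ⟨hy, hy2⟩))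
    have himY₂ : Y₂.image ⇑σ = Y₁ := by
      ext y
      rw [mem_image_equiv, hσ, Equiv.symm_swap]
      rcases eq_or_ne y w with rfl | hyw
      · rw [Equiv.swap_apply_left]
        simp [hvY₂, hwY₁]
      · rcases eq_or_ne y v with rfl | hyv
        · rw [Equiv.swap_apply_right]
          simp [hwY₂, hvY₁]
        · rw [Equiv.swap_apply_of_ne_of_ne hyw hyv]
          constructor
          · intro hy
            by_contra hy2
            exact hyv (Finset.mem_singleton.mp (hv ▸ Finset.mem_sdiff.mpr ⟨hy, hy2⟩))
          · intro hy
            by_contra hy2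
            exact hyw (Finset.mem_singleton.mp (hw ▸ Finset.mem_sdiff.mpr ⟨hy, hy2⟩))
    have hother : ∀ A ∈ C, A ≠ Y₁ → A ≠ Y₂ → A.image ⇑σ = A := by
      intro A hA hA1 hA2
      rw [hσ]
      apply image_swap_notmem
      · exact fun h => hA1 (hwloyal A hA h)
      · exact fun h => hA2 (hvloyal A hA h)
    refine ⟨σ, ?_, himY₁⟩
    apply Finset.eq_of_subset_of_card_le
    · rw [Finset.image_subset_iff]
      intro A hA
      rcases eq_or_ne A Y₁ with rfl | hA1
      · rw [himY₁]; exact h₂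
      · rcases eq_or_ne A Y₂ with rfl | hA2
        · rw [himY₂]; exact h₁
        · rw [hother A hA hA1 hA2]; exact hA
    · rw [Finset.card_image_of_injective _ (imageFun_inj σ)]

/-! ### gluing permutations -/

noncomputable def glue {α : Type*} [Fintype α] [DecidableEq α] {p q : α → Prop}
    [DecidablePred p] [DecidablePred q] (e : {x // p x} ≃ {x // q x}) : Equiv.Perm α :=
  (Equiv.sumCompl p).symm.trans ((e.sumCongr (Fintype.equivOfCardEq (by
      rw [Fintype.card_subtype_compl, Fintype.card_subtype_compl,
        Fintype.card_congr e]))).trans (Equiv.sumCompl q))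

lemma glue_pos {α : Type*} [Fintype α] [DecidableEq α] {p q : α → Prop}
    [DecidablePred p] [DecidablePred q] (e : {x // p x} ≃ {x // q x})
    (x : α) (hx : p x) : glue e x = ↑(e ⟨x, hx⟩) := by
  simp [glue, Equiv.sumCompl_symm_apply_of_pos hx]

lemma glue_neg {α : Type*} [Fintype α] [DecidableEq α] {p q : α → Prop}
    [DecidablePred p] [DecidablePred q] (e : {x // p x} ≃ {x // q x})
    (x : α) (hx : ¬ p x) : ¬ q (glue e x) := by
  simp only [glue, Equiv.trans_apply, Equiv.sumCompl_symm_apply_of_neg hx,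
    Equiv.sumCongr_apply, Sum.map_inr, Equiv.sumCompl_apply_inr]
  exact ((Fintype.equivOfCardEq (by
      rw [Fintype.card_subtype_compl, Fintype.card_subtype_compl,
        Fintype.card_congr e]) : {x // ¬ p x} ≃ {x // ¬ q x}) ⟨x, hx⟩).2

def finSub {t : ℕ} (h : t ≤ n) : {x : Fin n // x.val < t} ≃ Fin t where
  toFun x := ⟨x.1.1, x.2⟩
  invFun i := ⟨⟨i.1, lt_of_lt_of_le i.2 h⟩, i.2⟩
  left_inv x := rfl
  right_inv i := rfl

lemma cover_sup_eq {α : Type*} [Fintype α] [DecidableEq α] {D : Finset (Finset α)}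
    (h : IsSetCover D) : D.sup id = Finset.univ := by
  apply Finset.eq_univ_of_forall
  intro x
  obtain ⟨A, hA, hxA⟩ := h x
  exact Finset.le_sup (f := id) hA hxA

lemma mem_image_inj {α β : Type*} [DecidableEq β] {f : α → β} {s : Finset α} {a : α}
    (hf : Function.Injective f) : f a ∈ s.image f ↔ a ∈ s := by
  constructor
  · intro h
    obtain ⟨b, hb, hba⟩ := Finset.mem_image.mp h
    rwa [← hf hba]
  · exact Finset.mem_image_of_mem f


/-! ### the maps and round trips -/

noncomputable def fF (c : USub n) : SOut n :=
  fwd c.1 c.2.2.2.choose ⟨c.2.1, c.2.2.1, c.2.2.2.choose_spec.1, c.2.2.2.choose_spec.2⟩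

lemma gf (c : USub n) : UCoverRel n (gG (fF c)) c := by
  classical
  set C := c.1 with hCdef
  have hcov : IsSetCover C := c.2.1
  have hmin : IsMinimalCover C := c.2.2.1
  set Y : Finset (Fin n) := c.2.2.2.choose with hYdef
  have hYmem : Y ∈ C := c.2.2.2.choose_spec.1
  have hYcard : (Y.card : ℤ) = (n : ℤ) - C.card + 1 := c.2.2.2.choose_spec.2
  set s : SOut n := fF c with hsdef
  set Z : Finset (Fin n) := fwdZ C Y with hZdef
  set t : ℕ := Z.card with htdef
  have ht : t < n := fwdZ_card_lt ⟨hcov, hmin, hYmem, hYcard⟩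
  set e := Z.orderIsoOfFin rfl with hedef
  set eP : {x : Fin n // x.val < t} ≃ {x : Fin n // x ∈ Z} :=
    (finSub ht.le).trans e.toEquiv with hePdef
  set σg : Equiv.Perm (Fin n) := glue eP with hσgdef
  have k1 : ∀ i : Fin t, σg (jm s.1 i) = ↑(e i) := by
    intro i
    have hp : (jm s.1 i).val < t := i.isLt
    rw [hσgdef, glue_pos eP _ hp]
    rfl
  have hE : bwdE s = (C.erase Y).image (fun A => (fwdφ C Y A).image (jm s.1)) := by
    show ((C.erase Y).image (fwdφ C Y)).image (fun A => A.image (jm s.1)) = _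
    rw [Finset.image_image]
    rfl
  have c1 : ∀ A ∈ C.erase Y, ((fwdφ C Y A).image (jm s.1)).image ⇑σg = A := by
    intro A hA
    have hAZ : A ⊆ Z := Finset.le_sup (f := id) hA
    refine Finset.image_image.trans ?_
    ext x
    refine Finset.mem_image.trans ?_
    constructor
    · rintro ⟨i, hi, rfl⟩
      have hiA := mem_fwdφ.mp hi
      simpa [Function.comp, k1 i] using hiA
    · intro hx
      have hxZ : x ∈ Z := hAZ hx
      refine ⟨e.symm ⟨x, hxZ⟩, ?_, ?_⟩
      · apply mem_fwdφ.mpr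
        exact (congrArg (· ∈ A) (congrArg Subtype.val (e.apply_symm_apply ⟨x, hxZ⟩))).mpr hx
      · simp [Function.comp, k1]
  have c2 : (bwdE s).image (fun A => A.image ⇑σg) = C.erase Y := by
    rw [hE, Finset.image_image]
    calc (C.erase Y).image ((fun A => A.image ⇑σg) ∘ (fun A => (fwdφ C Y A).image (jm s.1)))
        = (C.erase Y).image id :=
          Finset.image_congr (fun A hA => by simpa [Function.comp] using c1 A hA)
    _ = C.erase Y := Finset.image_id
  have hstruct := structure_thm hmin hYmem hYcard
  have hgood : ∀ B ∈ bwdE s, ∃ v, v ∈ B ∧ σg v ∉ Y := by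
    intro B hB
    rw [hE] at hB
    obtain ⟨A, hA, rfl⟩ := Finset.mem_image.mp hB
    obtain ⟨vA, hvA, _⟩ := hstruct A hA
    have hvAA : vA ∈ A \ Y := by rw [hvA]; exact Finset.mem_singleton_self _
    have hvAin : vA ∈ ((fwdφ C Y A).image (jm s.1)).image ⇑σg := by
      rw [c1 A hA]
      exact (Finset.mem_sdiff.mp hvAA).1
    obtain ⟨b, hb, hbv⟩ := Finset.mem_image.mp hvAin
    exact ⟨b, hb, by rw [hbv]; exact (Finset.mem_sdiff.mp hvAA).2⟩
  have huniq : ∀ B ∈ bwdE s, ∀ v₁ v₂ : Fin n, v₁ ∈ B → σg v₁ ∉ Y → v₂ ∈ B →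
      σg v₂ ∉ Y → v₁ = v₂ := by
    intro B hB v₁ v₂ h1 h1' h2 h2'
    rw [hE] at hB
    obtain ⟨A, hA, rfl⟩ := Finset.mem_image.mp hB
    obtain ⟨vA, hvA, _⟩ := hstruct A hA
    have e1 : σg v₁ ∈ A := by rw [← c1 A hA]; exact Finset.mem_image_of_mem _ h1
    have e2 : σg v₂ ∈ A := by rw [← c1 A hA]; exact Finset.mem_image_of_mem _ h2
    have q1 : σg v₁ = vA := Finset.mem_singleton.mp
      (hvA ▸ Finset.mem_sdiff.mpr ⟨e1, h1'⟩)
    have q2 : σg v₂ = vA := Finset.mem_singleton.mp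
      (hvA ▸ Finset.mem_sdiff.mpr ⟨e2, h2'⟩)
    exact σg.injective (by rw [q1, q2])
  set V₂ : Finset (Fin n) → Fin n := fun B =>
    if h : ∃ v, v ∈ B ∧ σg v ∉ Y then h.choose
    else ⟨0, lt_of_le_of_lt (Nat.zero_le t) ht⟩ with hV₂def
  have hV₂spec : ∀ B ∈ bwdE s, V₂ B ∈ B ∧ σg (V₂ B) ∉ Y := by
    intro B hB
    obtain ⟨v, hv⟩ := hgood B hB
    have hex : ∃ v, v ∈ B ∧ σg v ∉ Y := ⟨v, hv⟩
    rw [hV₂def]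
    simp only [dif_pos hex]
    exact hex.choose_spec
  have hS₂ : Sys (bwdE s) V₂ := by
    intro B hB
    refine ⟨(hV₂spec B hB).1, ?_⟩
    intro B' hB' hmem'
    have hBo := hB
    have hB'o := hB'
    rw [hE] at hBo hB'o
    obtain ⟨A, hA, hAB⟩ := Finset.mem_image.mp hBo
    obtain ⟨A', hA', hAB'⟩ := Finset.mem_image.mp hB'o
    obtain ⟨vA, hvA, hloyal⟩ := hstruct A hA
    have hin : σg (V₂ B) ∈ A := by
      rw [← c1 A hA, hAB]
      exact Finset.mem_image_of_mem _ (hV₂spec B hB).1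
    have hq : σg (V₂ B) = vA := Finset.mem_singleton.mp
      (hvA ▸ Finset.mem_sdiff.mpr ⟨hin, (hV₂spec B hB).2⟩)
    have hin' : σg (V₂ B) ∈ A' := by
      rw [← c1 A' hA', hAB']
      exact Finset.mem_image_of_mem _ hmem'
    have : A' = A := hloyal A' (Finset.mem_of_mem_erase hA') (hq ▸ hin')
    rw [← hAB, ← hAB', this]
  obtain ⟨σ', hσ'⟩ := sys_indep (bwdV_spec s) hS₂
  have Ykey : (Finset.univ \ (bwdE s).image V₂).image ⇑σg = Y := by
    ext y
    rw [mem_image_equiv (σg : Fin n ≃ Fin n)]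
    constructor
    · intro hmem
      by_contra hyY
      obtain ⟨A, hAC, hyA⟩ := hcov y
      have hAe : A ∈ C.erase Y :=
        Finset.mem_erase.mpr ⟨fun h => hyY (h ▸ hyA), hAC⟩
      have hBE : ((fwdφ C Y A).image (jm s.1)) ∈ bwdE s := by
        rw [hE]; exact Finset.mem_image_of_mem _ hAe
      have hyA' : y ∈ ((fwdφ C Y A).image (jm s.1)).image ⇑σg := by
        rw [c1 A hAe]; exact hyA
      obtain ⟨b, hbB, hby⟩ := Finset.mem_image.mp hyA'
      have hb2 : σg b ∉ Y := by rw [hby]; exact hyY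
      have hVb : V₂ ((fwdφ C Y A).image (jm s.1)) = b :=
        huniq _ hBE _ _ (hV₂spec _ hBE).1 (hV₂spec _ hBE).2 hbB hb2
      have hsy : (σg : Fin n ≃ Fin n).symm y = b := by
        rw [← hby]; simp
      exact (Finset.mem_sdiff.mp hmem).2
        (by rw [hsy, ← hVb]; exact Finset.mem_image_of_mem V₂ hBE)
    · intro hyY
      refine Finset.mem_sdiff.mpr ⟨Finset.mem_univ _, ?_⟩
      intro hcon
      obtain ⟨B, hBE, hVB⟩ := Finset.mem_image.mp hcon
      have hspec := (hV₂spec B hBE).2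
      rw [hVB] at hspec
      simp only [Equiv.apply_symm_apply] at hspec
      exact hspec hyY
  have final : (bwdW (bwdE s) V₂).image (fun A => A.image ⇑σg) = C := by
    rw [show bwdW (bwdE s) V₂ =
      insert (Finset.univ \ (bwdE s).image V₂) (bwdE s) from rfl]
    rw [Finset.image_insert, Ykey, c2, Finset.insert_erase hYmem]
  refine ⟨σ'.trans σg, ?_⟩
  rw [mapC_trans]
  rw [show (gG s).1 = bwdW (bwdE s) (bwdV s) from rfl]
  rw [hσ', final]

lemma fg (s : SOut n) : SmallCoverRel n (fF (gG s)) s := by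
  classical
  set t : Fin n := s.1 with htdef
  set D := s.2.1 with hDdef
  have hDcov : IsSetCover D := s.2.2.1
  set E := bwdE s with hEdef
  set V := bwdV s with hVdef
  set Yb : Finset (Fin n) := Finset.univ \ E.image V with hYbdef
  set Cb := bwd s with hCbdef
  have hCb : Cb = insert Yb E := rfl
  have hcov : IsSetCover Cb := bwd_cover s
  have hmin : IsMinimalCover Cb := bwd_min s
  have hYbmem : Yb ∈ Cb := Finset.mem_insert_self _ _
  have hYbcard : (Yb.card : ℤ) = (n : ℤ) - Cb.card + 1 :=
    bwdW_Ycard (bwdV_spec s) (bwdE_avoid s)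
  set Ys : Finset (Fin n) := (gG s).2.2.2.choose with hYsdef
  have hYsmem : Ys ∈ Cb := (gG s).2.2.2.choose_spec.1
  have hYscard : (Ys.card : ℤ) = (n : ℤ) - Cb.card + 1 := (gG s).2.2.2.choose_spec.2
  obtain ⟨τ, hτC, hτY⟩ := witness_swap hmin hYsmem hYscard hYbmem hYbcard
  have h1 : FwdHyp Cb Ys := ⟨hcov, hmin, hYsmem, hYscard⟩
  have h2 : FwdHyp Cb Yb := ⟨hcov, hmin, hYbmem, hYbcard⟩
  have step1 : SmallCoverRel n (fwd Cb Ys h1) (fwd Cb Yb h2) :=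
    fwd_equiv h1 h2 τ hτC hτY
  have hYbE : Yb ∉ E := bwdW_Y_notmem (bwdV_spec s) (bwdE_avoid s)
  have hErase : Cb.erase Yb = E := by rw [hCb, Finset.erase_insert hYbE]
  have hZ : fwdZ Cb Yb = Finset.univ.image (jm t) := by
    rw [show fwdZ Cb Yb = (Cb.erase Yb).sup id from rfl, hErase]
    rw [show E = D.image (fun A => A.image (jm t)) from rfl]
    rw [Finset.sup_image]
    rw [show (id ∘ fun A : Finset (Fin t.val) => A.image (jm t)) =
      fun A : Finset (Fin t.val) => A.image (jm t) from rfl]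
    rw [← sup_id_image, cover_sup_eq hDcov]
  have htt : (fwdZ Cb Yb).card = t.val := by
    rw [hZ, Finset.card_image_of_injective _ (jm_inj t)]
    simp
  set f : Fin (fwdZ Cb Yb).card ↪o Fin n :=
    OrderEmbedding.ofStrictMono (fun i => jm t (Fin.cast htt i))
      (fun i j hij => by
        simp only [Fin.lt_def]
        exact hij) with hfdef
  have hfs : ∀ i, f i ∈ fwdZ Cb Yb := by
    intro i
    have hmem : (f i : Fin n) ∈ Finset.univ.image (jm t) :=
      Finset.mem_image_of_mem (jm t) (Finset.mem_univ (Fin.cast htt i))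
    rwa [← hZ] at hmem
  have hfeq : f = (fwdZ Cb Yb).orderEmbOfFin rfl :=
    Finset.orderEmbOfFin_unique' rfl hfs
  have hev : ∀ i : Fin (fwdZ Cb Yb).card,
      (((fwdZ Cb Yb).orderIsoOfFin rfl i : Fin n)).val = i.val := by
    intro i
    rw [Finset.coe_orderIsoOfFin_apply, ← hfeq]
    rfl
  have step2 : SmallCoverRel n (fwd Cb Yb h2) s := by
    refine ⟨finCongr htt, ?_⟩
    show (fwdD Cb Yb).image (fun A => A.image ⇑(finCongr htt)) = D
    rw [show fwdD Cb Yb = (Cb.erase Yb).image (fwdφ Cb Yb) from rfl, hErase]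
    rw [show E = D.image (fun A => A.image (jm t)) from rfl]
    rw [Finset.image_image, Finset.image_image]
    refine (Finset.image_congr (g := id) ?_).trans Finset.image_id
    intro A _
    show (fwdφ Cb Yb (A.image (jm t))).image ⇑(finCongr htt) = id A
    ext i
    rw [mem_image_equiv (finCongr htt)]
    rw [mem_fwdφ]
    have hval : (((fwdZ Cb Yb).orderIsoOfFin rfl ((finCongr htt).symm i) : Fin n)) =
        jm t i := by
      apply Fin.ext
      rw [hev]
      simp [jm, Fin.coe_castLE]
    rw [hval]
    show jm t i ∈ A.image (jm t) ↔ i ∈ id A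
    rw [mem_image_inj (jm_inj t)]
    rfl
  exact relS_trans step1 step2

lemma f_resp {a b : USub n} (h : UCoverRel n a b) :
    SmallCoverRel n (fF a) (fF b) := by
  obtain ⟨σ, hσ⟩ := h
  have ha : FwdHyp a.1 a.2.2.2.choose :=
    ⟨a.2.1, a.2.2.1, a.2.2.2.choose_spec.1, a.2.2.2.choose_spec.2⟩
  have hb : FwdHyp b.1 b.2.2.2.choose :=
    ⟨b.2.1, b.2.2.1, b.2.2.2.choose_spec.1, b.2.2.2.choose_spec.2⟩
  have hYmem : a.2.2.2.choose.image ⇑σ ∈ b.1 := by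
    rw [← hσ]
    exact Finset.mem_image_of_mem _ ha.2.2.1
  have hcards : b.1.card = a.1.card := by
    rw [← hσ, Finset.card_image_of_injective _ (imageFun_inj σ)]
  have hYcard : ((a.2.2.2.choose.image ⇑σ).card : ℤ) = (n : ℤ) - b.1.card + 1 := by
    rw [Finset.card_image_of_injective _ σ.injective, hcards]
    exact ha.2.2.2
  have hmid : FwdHyp b.1 (a.2.2.2.choose.image ⇑σ) := ⟨b.2.1, b.2.2.1, hYmem, hYcard⟩
  have s1 : SmallCoverRel n (fwd a.1 a.2.2.2.choose ha)
      (fwd b.1 (a.2.2.2.choose.image ⇑σ) hmid) :=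
    fwd_equiv ha hmid σ hσ rfl
  obtain ⟨τ, hτC, hτY⟩ := witness_swap b.2.2.1 hYmem hYcard hb.2.2.1 hb.2.2.2
  have s2 : SmallCoverRel n (fwd b.1 (a.2.2.2.choose.image ⇑σ) hmid)
      (fwd b.1 b.2.2.2.choose hb) :=
    fwd_equiv hmid hb τ hτC hτY
  exact relS_trans s1 s2

lemma g_resp {a b : SOut n} (h : SmallCoverRel n a b) :
    UCoverRel n (gG a) (gG b) := by
  classical
  obtain ⟨σ, hσ⟩ := h
  set eP : {x : Fin n // x.val < a.1.val} ≃ {x : Fin n // x.val < b.1.val} :=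
    ((finSub a.1.isLt.le).trans σ).trans (finSub b.1.isLt.le).symm with hePdef
  set ρ : Equiv.Perm (Fin n) := glue eP with hρdef
  have k1 : ∀ i : Fin a.1.val, ρ (jm a.1 i) = jm b.1 (σ i) := by
    intro i
    have hp : (jm a.1 i).val < a.1.val := i.isLt
    rw [hρdef, glue_pos eP _ hp]
    rfl
  have hE : (bwdE a).image (fun B => B.image ⇑ρ) = bwdE b := by
    rw [show bwdE a = a.2.1.image (fun A => A.image (jm a.1)) from rfl]
    rw [show bwdE b = b.2.1.image (fun A => A.image (jm b.1)) from rfl]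
    rw [Finset.image_image, ← hσ, Finset.image_image]
    apply Finset.image_congr
    intro A _
    simp only [Function.comp]
    rw [Finset.image_image, Finset.image_image]
    apply Finset.image_congr
    intro x _
    simp only [Function.comp]
    exact k1 x
  set V' : Finset (Fin n) → Fin n := fun B => ρ (bwdV a (B.image ⇑ρ.symm)) with hV'def
  have hback : ∀ B : Finset (Fin n), (B.image ⇑ρ).image ⇑ρ.symm = B :=
    fun B => image_image_equiv (ρ : Fin n ≃ Fin n) B
  have hS' : Sys (bwdE b) V' := by
    intro B hB
    rw [← hE] at hB
    obtain ⟨B₀, hB₀, rfl⟩ := Finset.mem_image.mp hB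
    constructor
    · rw [hV'def]
      simp only
      rw [hback]
      exact Finset.mem_image_of_mem _ (bwdV_spec a B₀ hB₀).1
    · intro B' hB' hmem
      rw [← hE] at hB'
      obtain ⟨B₁, hB₁, rfl⟩ := Finset.mem_image.mp hB'
      have hmm : ρ (bwdV a B₀) ∈ B₁.image ⇑ρ := by
        rw [hV'def] at hmem
        simp only at hmem
        rwa [hback] at hmem
      have hv : bwdV a B₀ ∈ B₁ := (mem_image_inj ρ.injective).mp hmm
      exact congrArg _ ((bwdV_spec a B₀ hB₀).2 B₁ hB₁ hv)
  have hY : (Finset.univ \ (bwdE a).image (bwdV a)).image ⇑ρ =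
      Finset.univ \ (bwdE b).image V' := by
    rw [image_equiv_sdiff_univ (ρ : Fin n ≃ Fin n)]
    congr 1
    rw [← hE, Finset.image_image, Finset.image_image]
    apply Finset.image_congr
    intro B hB
    simp only [Function.comp, hV'def]
    rw [hback]
  have hstep : (gG a).1.image (fun A => A.image ⇑ρ) = bwdW (bwdE b) V' := by
    rw [show (gG a).1 =
      insert (Finset.univ \ (bwdE a).image (bwdV a)) (bwdE a) from rfl]
    rw [Finset.image_insert, hY, hE]
    rfl
  obtain ⟨σ', hσ'⟩ := sys_indep hS' (bwdV_spec b)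
  exact ⟨ρ.trans σ', by rw [mapC_trans, hstep, hσ']; rfl⟩

end CoverComp

theorem cover_compilation (n : ℕ) :
    Nonempty (Quot (UCoverRel n) ≃ Quot (SmallCoverRel n)) := by
  refine ⟨{
    toFun := Quot.lift (fun c => Quot.mk _ (CoverComp.fF c))
      (fun a b h => Quot.sound (CoverComp.f_resp h)),
    invFun := Quot.lift (fun s => Quot.mk _ (CoverComp.gG s))
      (fun a b h => Quot.sound (CoverComp.g_resp h)),
    left_inv := ?_, right_inv := ?_ }⟩
  · intro q
    induction q using Quot.ind with
    | _ c => exact Quot.sound (CoverComp.gf c)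
  · intro q
    induction q using Quot.ind with
    | _ s => exact Quot.sound (CoverComp.fg s)
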